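/- Let Ω ⊆ ℝⁿ be a convex bounded open set with smooth boundary and outward unit normal ν, and let u be a classical solution of the graphical mean curvature flow with transport term and Neumann boundary condition, with v := √(1+|du|²) of class C¹ up to ∂Ω. Then for every t > 0 and every x ∈ ∂Ω: (D_{Γ_t}v·ν⃗)(x,t) ≤ 0, where ν⃗ := (ν,0); equivalently, since du·ν = 0 on ∂Ω, dv(x,t)·ν(x) ≤ 0 on ∂Ω. -/

import Mathlib

open MeasureTheory Metric Set Real Filter
open scoped RealInnerProductSpace ENNReal NNReal Topology ContDiff

noncomputable section

abbrev Eucl (n : ℕ) := EuclideanSpace ℝ (Fin n)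

variable {n : ℕ}

/-- spatial gradient of a time-dependent function -/
def sgrad (u : Eucl n → ℝ → ℝ) (x : Eucl n) (t : ℝ) : Eucl n :=
  gradient (fun y => u y t) x

/-- the area element `v = √(1+|du|²)` -/
def vel (u : Eucl n → ℝ → ℝ) (x : Eucl n) (t : ℝ) : ℝ :=
  Real.sqrt (1 + ‖sgrad u x t‖ ^ 2)

/-- divergence of a vector field on `ℝⁿ` -/
def divg (F : Eucl n → Eucl n) (x : Eucl n) : ℝ :=
  ∑ i, fderiv ℝ (fun y => F y i) x (EuclideanSpace.single i 1)

/-- the upward unit normal `(−du,1)/v` of the graph, as a vector in `ℝ^{n+1}` -/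
def unormal (u : Eucl n → ℝ → ℝ) (x : Eucl n) (t : ℝ) : Eucl (n + 1) :=
  (WithLp.equiv 2 (Fin (n + 1) → ℝ)).symm
    (Fin.snoc (fun i => -(sgrad u x t i) / vel u x t) (1 / vel u x t))

/-- the point `(x, u(x,t))` on the graph `Γ_t ⊆ ℝ^{n+1}` -/
def gpt (u : Eucl n → ℝ → ℝ) (x : Eucl n) (t : ℝ) : Eucl (n + 1) :=
  (WithLp.equiv 2 (Fin (n + 1) → ℝ)).symm (Fin.snoc (fun i => x i) (u x t))

/-- `f⃗ · n⃗` evaluated at `(x, u(x,t), t)` -/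
def fdotn (f : Eucl n → ℝ → ℝ → Eucl (n + 1)) (u : Eucl n → ℝ → ℝ)
    (x : Eucl n) (t : ℝ) : ℝ :=
  ⟪f x (u x t) t, unormal u x t⟫

/-- signed distance to `∂Ω` (negative inside `Ω`) -/
def sdist (Ω : Set (Eucl n)) (y : Eucl n) : ℝ := infDist y Ω - infDist y Ωᶜ

/-- the outward unit normal of `∂Ω`, as the gradient of the signed distance -/
def outNormal (Ω : Set (Eucl n)) (x : Eucl n) : Eucl n := gradient (sdist Ω) x

/-- `∂Ω` is smooth: the signed distance is smooth near the boundary. -/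
def SmoothBoundary (Ω : Set (Eucl n)) : Prop :=
  ∃ U : Set (Eucl n), IsOpen U ∧ frontier Ω ⊆ U ∧ ContDiffOn ℝ ∞ (sdist Ω) U

/-- classical solution of graphical MCF with transport term and Neumann condition -/
structure IsMCFSolution (Ω : Set (Eucl n)) (f : Eucl n → ℝ → ℝ → Eucl (n + 1))
    (u₀ : Eucl n → ℝ) (u : Eucl n → ℝ → ℝ) (T : ℝ) : Prop where
  reg_x : ∀ t ∈ Ioo (0 : ℝ) T, ContDiffOn ℝ 2 (fun x => u x t) Ω
  reg_t : ∀ x ∈ Ω, ∀ t ∈ Ioo (0 : ℝ) T, DifferentiableAt ℝ (u x) t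
  cont : ContinuousOn (fun p : Eucl n × ℝ => u p.1 p.2) (closure Ω ×ˢ Icc 0 T)
  grad_cont : ∀ t ∈ Ioo (0 : ℝ) T, ContinuousOn (fun x => sgrad u x t) (closure Ω)
  pde : ∀ x ∈ Ω, ∀ t ∈ Ioo (0 : ℝ) T,
    deriv (u x) t / vel u x t
      = divg (fun y => (vel u y t)⁻¹ • sgrad u y t) x + fdotn f u x t
  neumann : ∀ t ∈ Ioo (0 : ℝ) T, ∀ x ∈ frontier Ω, ⟪sgrad u x t, outNormal Ω x⟫ = 0
  init : ∀ x ∈ closure Ω, u x 0 = u₀ x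

/-- mixed norm `‖f⃗‖_{L^q_t L^p_x (a,b,Γ_t)}`, with the graph integral
`∫_{Γ_t} g dH^n = ∫_Ω g(x,u(x,t)) v dx`, as an extended real number -/
def mixedNormE (Ω : Set (Eucl n)) (f : Eucl n → ℝ → ℝ → Eucl (n + 1))
    (u : Eucl n → ℝ → ℝ) (p q a b : ℝ) : ℝ≥0∞ :=
  (∫⁻ t in Ioo a b,
      (∫⁻ x in Ω, (‖f x (u x t) t‖₊ : ℝ≥0∞) ^ p * ENNReal.ofReal (vel u x t)) ^ (q / p))
    ^ (1 / q)


variable {n : ℕ} {Ω : Set (Eucl n)}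

lemma my_le_infDist {s : Set (Eucl n)} (hs : s.Nonempty) {x : Eucl n} {b : ℝ}
    (h : ∀ z ∈ s, b ≤ dist x z) : b ≤ infDist x s := by
  by_contra hlt
  obtain ⟨z, hz, hdz⟩ := (infDist_lt_iff hs).1 (lt_of_not_ge hlt)
  exact absurd (h z hz) (not_le.2 hdz)

lemma aux_halfspace_le (hne : Ω.Nonempty) {w : Eucl n} {c : ℝ}
    (hw : ‖w‖ = 1) (hW : ∀ z ∈ Ω, ⟪z, w⟫ ≤ c) (y : Eucl n) :
    ⟪y, w⟫ - c ≤ sdist Ω y := by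
  have h1 : ⟪y, w⟫ - c ≤ infDist y Ω := by
    refine my_le_infDist hne fun z hz => ?_
    have hcs : ⟪y - z, w⟫ ≤ ‖y - z‖ * ‖w‖ := real_inner_le_norm _ _
    rw [hw, mul_one, inner_sub_left] at hcs
    have := hW z hz
    rw [dist_eq_norm]
    linarith
  have hr : 0 ≤ infDist y Ωᶜ := infDist_nonneg
  rcases eq_or_lt_of_le hr with hr0 | hrpos
  · simpa [sdist, ← hr0] using h1
  · -- ball y r ⊆ Ω
    have hball : ∀ z : Eucl n, dist y z < infDist y Ωᶜ → z ∈ Ω := by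
      intro z hz
      by_contra hzc
      exact absurd (infDist_le_dist_of_mem (mem_compl hzc)) (not_le.2 hz)
    have hsw : ∀ s : ℝ, 0 ≤ s → s < infDist y Ωᶜ → ⟪y, w⟫ + s ≤ c := by
      intro s hs0 hsr
      have hmem : y + s • w ∈ Ω := by
        apply hball
        rw [dist_self_add_right, norm_smul, hw, mul_one, Real.norm_eq_abs,
          abs_of_nonneg hs0]
        exact hsr
      have := hW _ hmem
      rw [inner_add_left, real_inner_smul_left, real_inner_self_eq_norm_sq, hw] at this
      simpa using this
    have hkey : ⟪y, w⟫ - c ≤ -(infDist y Ωᶜ) := by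
      by_contra hcon
      push_neg at hcon
      have h0 : ⟪y, w⟫ + 0 ≤ c := hsw 0 le_rfl hrpos
      set r := infDist y Ωᶜ
      have hs0 : (0:ℝ) ≤ (c - ⟪y, w⟫ + r) / 2 := by linarith
      have hsr : (c - ⟪y, w⟫ + r) / 2 < r := by linarith
      have := hsw _ hs0 hsr
      linarith
    have := infDist_nonneg (x := y) (s := Ω)
    simp only [sdist]
    linarith

lemma aux_supporting (hΩopen : IsOpen Ω) (hΩconv : Convex ℝ Ω) (hne : Ω.Nonempty)
    {x : Eucl n} (hx : x ∈ frontier Ω) :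
    ∃ w : Eucl n, ‖w‖ = 1 ∧ ∀ z ∈ Ω, ⟪z, w⟫ ≤ ⟪x, w⟫ := by
  have hxΩ : x ∉ Ω := by
    rw [hΩopen.frontier_eq] at hx
    exact hx.2
  obtain ⟨f, hf⟩ := geometric_hahn_banach_open_point hΩconv hΩopen hxΩ
  set w₀ : Eucl n := (InnerProductSpace.toDual ℝ (Eucl n)).symm f with hw₀
  have hw₀app : ∀ z : Eucl n, ⟪w₀, z⟫ = f z := fun z =>
    InnerProductSpace.toDual_symm_apply
  have hw₀app' : ∀ z : Eucl n, ⟪z, w₀⟫ = f z := fun z => by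
    rw [real_inner_comm]; exact hw₀app z
  have hw₀ne : w₀ ≠ 0 := by
    obtain ⟨a₀, ha₀⟩ := hne
    intro h0
    have : f a₀ < f x := hf a₀ ha₀
    have h1 : ⟪w₀, a₀⟫ = 0 := by rw [h0, inner_zero_left]
    have h2 : ⟪w₀, x⟫ = 0 := by rw [h0, inner_zero_left]
    rw [hw₀app] at h1 h2
    linarith
  refine ⟨‖w₀‖⁻¹ • w₀, ?_, ?_⟩
  · rw [norm_smul, norm_inv, norm_norm, inv_mul_cancel₀ (norm_ne_zero_iff.2 hw₀ne)]
  · intro z hz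
    rw [real_inner_smul_right, real_inner_smul_right, hw₀app', hw₀app']
    exact mul_le_mul_of_nonneg_left (hf z hz).le (inv_nonneg.2 (norm_nonneg _))

lemma aux_sdist_frontier_eq_zero {x : Eucl n} (hΩopen : IsOpen Ω) (hx : x ∈ frontier Ω) :
    sdist Ω x = 0 := by
  have h1 : infDist x Ω = 0 := by
    rw [← infDist_closure]
    exact infDist_zero_of_mem hx.1
  have h2 : infDist x Ωᶜ = 0 := by
    apply infDist_zero_of_mem
    rw [hΩopen.frontier_eq] at hx
    exact hx.2
  simp [sdist, h1, h2]

lemma aux_sdist_zero_mem_frontier (hΩopen : IsOpen Ω) (hne : Ω.Nonempty)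
    (hcne : Ωᶜ.Nonempty) {y : Eucl n} (hy : sdist Ω y = 0) : y ∈ frontier Ω := by
  have heq : infDist y Ω = infDist y Ωᶜ := by
    have := sub_eq_zero.1 hy
    exact this
  have hyΩ : y ∉ Ω := by
    intro hmem
    have h1 : infDist y Ω = 0 := infDist_zero_of_mem hmem
    have h2 : infDist y Ωᶜ = 0 := by rw [← heq, h1]
    have : y ∈ closure Ωᶜ := (mem_closure_iff_infDist_zero hcne).2 h2
    rw [(isClosed_compl_iff.2 hΩopen).closure_eq] at this
    exact this hmem
  have h2 : infDist y Ωᶜ = 0 := infDist_zero_of_mem hyΩ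
  have h1 : infDist y Ω = 0 := by rw [heq, h2]
  have hycl : y ∈ closure Ω := (mem_closure_iff_infDist_zero hne).2 h1
  rw [hΩopen.frontier_eq]
  exact ⟨hycl, hyΩ⟩

lemma aux_interior_closure (hΩopen : IsOpen Ω) (hΩconv : Convex ℝ Ω) :
    interior (closure Ω) = Ω := by
  rcases Ω.eq_empty_or_nonempty with rfl | ⟨z, hz⟩
  · simp
  refine subset_antisymm ?_ (hΩopen.subset_interior_iff.2 subset_closure)
  intro y hy
  obtain ⟨ε, hε, hball⟩ := Metric.isOpen_iff.1 isOpen_interior y hy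
  set δ : ℝ := ε / 2 / (‖y - z‖ + 1) with hδdef
  have hden : (0:ℝ) < ‖y - z‖ + 1 := by positivity
  have hδ : 0 < δ := by positivity
  have hy' : y + δ • (y - z) ∈ closure Ω := by
    apply interior_subset
    apply hball
    rw [mem_ball, dist_eq_norm]
    simp only [add_sub_cancel_left, norm_smul, Real.norm_eq_abs, abs_of_pos hδ]
    calc δ * ‖y - z‖ ≤ δ * (‖y - z‖ + 1) := by nlinarith [norm_nonneg (y - z)]
    _ = ε / 2 := by rw [hδdef]; field_simp
    _ < ε := by linarith
  have h1δ : (0:ℝ) < 1 + δ := by linarith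
  have hcombo : (δ / (1 + δ)) • z + (1 / (1 + δ)) • (y + δ • (y - z)) = y := by
    match_scalars <;> field_simp <;> ring
  have := hΩconv.combo_interior_closure_mem_interior
    (x := z) (y := y + δ • (y - z)) (a := δ / (1 + δ)) (b := 1 / (1 + δ))
    (by rwa [hΩopen.interior_eq]) hy' (by positivity) (by positivity)
    (by rw [← add_div, add_comm δ 1, div_self h1δ.ne'])
  rw [hcombo, hΩopen.interior_eq] at this
  exact this

lemma aux_exists_halfspace (hΩopen : IsOpen Ω) (hΩconv : Convex ℝ Ω)
    (hne : Ω.Nonempty) (hcne : Ωᶜ.Nonempty) (p : Eucl n) {ε : ℝ} (hε : 0 < ε) :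
    ∃ w : Eucl n, ∃ c : ℝ, ‖w‖ = 1 ∧ (∀ z ∈ Ω, ⟪z, w⟫ ≤ c) ∧
      sdist Ω p ≤ ⟪p, w⟫ - c + ε := by
  set C := closure Ω with hC
  have hCconv : Convex ℝ C := hΩconv.closure
  have hCne : C.Nonempty := hne.closure
  by_cases hp : p ∈ C
  · -- interior-ish case
    obtain ⟨q, hq, hdq⟩ := (infDist_lt_iff hcne).1
      (show infDist p Ωᶜ < infDist p Ωᶜ + ε by linarith)
    obtain ⟨f, hf⟩ := geometric_hahn_banach_open_point hΩconv hΩopen hq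
    set w₀ : Eucl n := (InnerProductSpace.toDual ℝ (Eucl n)).symm f with hw₀
    have hw₀app' : ∀ z : Eucl n, ⟪z, w₀⟫ = f z := fun z => by
      rw [real_inner_comm]; exact InnerProductSpace.toDual_symm_apply
    have hw₀ne : w₀ ≠ 0 := by
      obtain ⟨a₀, ha₀⟩ := hne
      intro h0
      have h1 : ⟪a₀, w₀⟫ = 0 := by rw [h0, inner_zero_right]
      have h2 : ⟪q, w₀⟫ = 0 := by rw [h0, inner_zero_right]
      rw [hw₀app'] at h1 h2
      have := hf a₀ ha₀
      linarith
    set w : Eucl n := ‖w₀‖⁻¹ • w₀ with hwdef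
    have hwnorm : ‖w‖ = 1 := by
      rw [hwdef, norm_smul, norm_inv, norm_norm,
        inv_mul_cancel₀ (norm_ne_zero_iff.2 hw₀ne)]
    refine ⟨w, ⟪q, w⟫, hwnorm, ?_, ?_⟩
    · intro z hz
      rw [hwdef, real_inner_smul_right, real_inner_smul_right, hw₀app', hw₀app']
      exact mul_le_mul_of_nonneg_left (hf z hz).le (inv_nonneg.2 (norm_nonneg _))
    · have h1 : infDist p Ω = 0 := by
        rw [← infDist_closure]; exact infDist_zero_of_mem hp
      have hcs : ⟪p - q, w⟫ ≤ ‖p - q‖ * ‖w‖ := real_inner_le_norm _ _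
      have hcs' : -(‖p - q‖) ≤ ⟪p - q, w⟫ := by
        have := real_inner_le_norm (p - q) (-w)
        rw [inner_neg_right, norm_neg, hwnorm, mul_one] at this
        linarith
      have hpq : ‖p - q‖ < infDist p Ωᶜ + ε := by rwa [← dist_eq_norm]
      have hexp : ⟪p, w⟫ - ⟪q, w⟫ = ⟪p - q, w⟫ := by rw [inner_sub_left]
      simp only [sdist, h1]
      linarith
  · -- exterior case
    have hCcl : IsClosed C := isClosed_closure
    obtain ⟨q, hq, hdq⟩ := hCcl.exists_infDist_eq_dist hCne p
    have hRpos : 0 < dist p q := by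
      rw [dist_pos]; rintro rfl; exact hp hq
    have hpqne : ‖p - q‖ ≠ 0 := by rw [← dist_eq_norm]; exact hRpos.ne'
    set w : Eucl n := ‖p - q‖⁻¹ • (p - q) with hwdef
    have hwnorm : ‖w‖ = 1 := by
      rw [hwdef, norm_smul, norm_inv, norm_norm, inv_mul_cancel₀ hpqne]
    have hobtuse : ∀ z ∈ C, ⟪z - q, p - q⟫ ≤ 0 := by
      intro z hz
      refine le_of_forall_pos_le_add fun η hη => ?_
      set θ : ℝ := min 1 (2 * η / (‖z - q‖ ^ 2 + 1)) with hθdef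
      have hden : (0:ℝ) < ‖z - q‖ ^ 2 + 1 := by positivity
      have hθpos : 0 < θ := lt_min one_pos (by positivity)
      have hθle1 : θ ≤ 1 := min_le_left _ _
      have hmem : q + θ • (z - q) ∈ C := by
        have : q + θ • (z - q) = (1 - θ) • q + θ • z := by module
        rw [this]
        exact hCconv hq hz (by linarith) hθpos.le (by ring)
      have hge : dist p q ≤ dist p (q + θ • (z - q)) := hdq ▸ infDist_le_dist_of_mem hmem
      have hsq : dist p q ^ 2 ≤ dist p (q + θ • (z - q)) ^ 2 :=
        pow_le_pow_left₀ dist_nonneg hge 2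
      have hre : p - (q + θ • (z - q)) = (p - q) - θ • (z - q) := by abel
      rw [dist_eq_norm, dist_eq_norm, hre] at hsq
      have hexpand : ‖(p - q) - θ • (z - q)‖ ^ 2
          = ‖p - q‖ ^ 2 - 2 * θ * ⟪p - q, z - q⟫ + θ ^ 2 * ‖z - q‖ ^ 2 := by
        rw [norm_sub_sq_real, real_inner_smul_right, norm_smul, Real.norm_eq_abs,
          mul_pow, sq_abs]
        ring
      rw [hexpand] at hsq
      have h4 : ⟪p - q, z - q⟫ ≤ θ * ‖z - q‖^2 / 2 := by nlinarith [hθpos]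
      have hθb : θ ≤ 2 * η / (‖z - q‖ ^ 2 + 1) := min_le_right _ _
      have : θ * ‖z - q‖^2 / 2 ≤ η := by
        have h5 : θ * (‖z - q‖^2 + 1) ≤ 2 * η := by
          calc θ * (‖z - q‖^2 + 1) ≤ (2 * η / (‖z - q‖ ^ 2 + 1)) * (‖z - q‖^2 + 1) :=
            mul_le_mul_of_nonneg_right hθb hden.le
          _ = 2 * η := by field_simp
        nlinarith [sq_nonneg (‖z - q‖)]
      rw [real_inner_comm]
      linarith
    refine ⟨w, ⟪q, w⟫, hwnorm, ?_, ?_⟩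
    · intro z hz
      have h := hobtuse z (subset_closure hz)
      have : ⟪z, w⟫ - ⟪q, w⟫ = ‖p - q‖⁻¹ * ⟪z - q, p - q⟫ := by
        rw [hwdef, ← inner_sub_left, real_inner_smul_right]
      nlinarith [inv_nonneg.2 (norm_nonneg (p - q)), mul_nonpos_of_nonneg_of_nonpos
        (inv_nonneg.2 (norm_nonneg (p - q))) h]
    · have h2 : infDist p Ωᶜ = 0 := by
        apply infDist_zero_of_mem
        intro hmem
        exact hp (subset_closure hmem)
      have h1 : infDist p Ω = dist p q := by rw [← infDist_closure]; exact hdq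
      have hval : ⟪p, w⟫ - ⟪q, w⟫ = ‖p - q‖ := by
        rw [hwdef, ← inner_sub_left, real_inner_smul_right,
          real_inner_self_eq_norm_sq]
        field_simp
      simp only [sdist, h1, h2]
      rw [dist_eq_norm]
      linarith

lemma aux_sdist_convex (hΩopen : IsOpen Ω) (hΩconv : Convex ℝ Ω)
    (hne : Ω.Nonempty) (hcne : Ωᶜ.Nonempty) :
    ConvexOn ℝ univ (sdist Ω) := by
  refine ⟨convex_univ, fun y _ z _ a b ha hb hab => ?_⟩
  refine le_of_forall_pos_le_add fun ε hε => ?_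
  obtain ⟨w, c, hw, hW, hub⟩ :=
    aux_exists_halfspace hΩopen hΩconv hne hcne (a • y + b • z) hε
  have hlin : ⟪a • y + b • z, w⟫ - c = a * (⟪y, w⟫ - c) + b * (⟪z, w⟫ - c) := by
    rw [inner_add_left, real_inner_smul_left, real_inner_smul_left]
    have : a * c + b * c = c := by rw [← add_mul, hab, one_mul]
    linarith
  have h1 : ⟪y, w⟫ - c ≤ sdist Ω y := aux_halfspace_le hne hw hW y
  have h2 : ⟪z, w⟫ - c ≤ sdist Ω z := aux_halfspace_le hne hw hW z
  calc sdist Ω (a • y + b • z) ≤ ⟪a • y + b • z, w⟫ - c + ε := hub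
  _ = a * (⟪y, w⟫ - c) + b * (⟪z, w⟫ - c) + ε := by rw [hlin]
  _ ≤ a * sdist Ω y + b * sdist Ω z + ε := by
      have := mul_le_mul_of_nonneg_left h1 ha
      have := mul_le_mul_of_nonneg_left h2 hb
      linarith
lemma aux_infty_le : (1 : WithTop ℕ∞) + 1 ≤ (∞ : WithTop ℕ∞) := by
  rw [show (1 : WithTop ℕ∞) + 1 = ((1 + 1 : ℕ∞) : WithTop ℕ∞) by norm_cast]
  exact WithTop.coe_le_coe.mpr le_top

lemma aux_one_le_infty : (1 : WithTop ℕ∞) ≤ (∞ : WithTop ℕ∞) := by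
  rw [show (1 : WithTop ℕ∞) = ((1 : ℕ∞) : WithTop ℕ∞) by norm_cast]
  exact WithTop.coe_le_coe.mpr le_top

lemma aux_grad_apply (f : Eucl n → ℝ) (y : Eucl n) (v : Eucl n) :
    ⟪gradient f y, v⟫ = fderiv ℝ f y v := by
  rw [gradient]
  exact InnerProductSpace.toDual_symm_apply

lemma aux_hess_nonneg {U : Set (Eucl n)} (hU : IsOpen U)
    (hsm : ContDiffOn ℝ ∞ (sdist Ω) U)
    (hconv : ConvexOn ℝ univ (sdist Ω)) {x : Eucl n} (hxU : x ∈ U) (τ : Eucl n) :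
    0 ≤ ⟪(fderiv ℝ (fun y => gradient (sdist Ω) y) x) τ, τ⟫ := by
  set d := sdist Ω with hd
  set N : Eucl n → Eucl n := fun y => gradient d y with hN
  -- N is C¹ on U
  have hfd : ContDiffOn ℝ 1 (fderiv ℝ d) U := hsm.fderiv_of_isOpen hU aux_infty_le
  have hNC1 : ContDiffOn ℝ 1 N U := by
    have : ContDiff ℝ 1 fun ℓ : (Eucl n) →L[ℝ] ℝ =>
        (InnerProductSpace.toDual ℝ (Eucl n)).symm ℓ :=
      (InnerProductSpace.toDual ℝ (Eucl n)).symm.contDiff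
    exact this.comp_contDiffOn hfd
  have hNdiff : DifferentiableAt ℝ N x :=
    ((hNC1.differentiableOn one_ne_zero).differentiableAt (hU.mem_nhds hxU))
  set H := fderiv ℝ N x with hH
  -- the line s ↦ x + s • τ
  have hcder : ∀ s₀ : ℝ, HasDerivAt (fun s : ℝ => x + s • τ) τ s₀ := by
    intro s₀
    have h1 : HasDerivAt (fun s : ℝ => s • τ) ((1:ℝ) • τ) s₀ :=
      (hasDerivAt_id s₀).smul_const τ
    rw [one_smul] at h1
    exact h1.const_add x
  obtain ⟨δ, hδpos, hδ⟩ : ∃ δ > 0, ∀ s : ℝ, |s| < δ → x + s • τ ∈ U := by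
    have hcont : Continuous fun s : ℝ => x + s • τ := by continuity
    have : IsOpen ((fun s : ℝ => x + s • τ) ⁻¹' U) := hU.preimage hcont
    obtain ⟨δ, hδpos, hball⟩ := Metric.isOpen_iff.1 this 0 (by simp [hxU])
    exact ⟨δ, hδpos, fun s hs => hball (by simpa [Real.dist_eq] using hs)⟩
  set φ : ℝ → ℝ := fun s => ⟪N (x + s • τ), τ⟫ with hφdef
  -- derivative of φ at 0
  have hφ : HasDerivAt φ ⟪H τ, τ⟫ 0 := by
    have hNx : HasFDerivAt N H ((fun s : ℝ => x + s • τ) 0) := by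
      simpa using hNdiff.hasFDerivAt
    have hNc : HasDerivAt (fun s : ℝ => N (x + s • τ)) (H τ) 0 := by
      have := hNx.comp_hasDerivAt 0 (hcder 0)
      simpa [Function.comp_def] using this
    have := (hNc.inner ℝ (hasDerivAt_const (0:ℝ) τ))
    simpa using this
  -- ψ is convex, deriv ψ = φ on the ball
  set ψ : ℝ → ℝ := fun s => d (x + s • τ) with hψdef
  have hψconv : ConvexOn ℝ univ ψ := by
    have := hconv.comp_affineMap
      (AffineMap.lineMap (x : Eucl n) (x + τ) : ℝ →ᵃ[ℝ] Eucl n)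
    have heq : (d ∘ (AffineMap.lineMap (x : Eucl n) (x + τ) : ℝ →ᵃ[ℝ] Eucl n)) = ψ := by
      funext s
      simp only [Function.comp_apply, AffineMap.lineMap_apply, vsub_eq_sub,
        add_sub_cancel_left, vadd_eq_add, hψdef]
      rw [add_comm]
    rw [heq] at this
    refine ⟨convex_univ, fun y hy z hz a b ha hb hab => ?_⟩
    exact this.2 (by simp) (by simp) ha hb hab
  have hψderiv : ∀ s : ℝ, |s| < δ → HasDerivAt ψ (φ s) s := by
    intro s hs
    have hmem : x + s • τ ∈ U := hδ s hs
    have hdd : DifferentiableAt ℝ d (x + s • τ) :=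
      (hsm.contDiffAt (hU.mem_nhds hmem)).differentiableAt (by simp)
    have h1 : HasDerivAt (fun σ => d (x + σ • τ)) (fderiv ℝ d (x + s • τ) τ) s := by
      have := HasFDerivAt.comp_hasDerivAt s
        (by simpa using hdd.hasFDerivAt) (hcder s)
      simpa [Function.comp_def] using this
    have h2 : fderiv ℝ d (x + s • τ) τ = φ s := (aux_grad_apply d _ τ).symm
    rwa [h2] at h1
  have hmono : ∀ s : ℝ, 0 < s → s < δ → φ 0 ≤ φ s := by
    intro s hs0 hsδ
    have hconvb : ConvexOn ℝ (Metric.ball (0:ℝ) δ) ψ :=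
      hψconv.subset (subset_univ _) (convex_ball _ _)
    have hdiff : ∀ y ∈ Metric.ball (0:ℝ) δ, DifferentiableAt ℝ ψ y := by
      intro y hy
      rw [mem_ball, Real.dist_eq, sub_zero] at hy
      exact (hψderiv y hy).differentiableAt
    have hmder := hconvb.monotoneOn_deriv hdiff
    have h0mem : (0:ℝ) ∈ Metric.ball (0:ℝ) δ := by simp [hδpos]
    have hsmem : s ∈ Metric.ball (0:ℝ) δ := by
      rw [mem_ball, Real.dist_eq, sub_zero, abs_of_pos hs0]; exact hsδ
    have := hmder h0mem hsmem hs0.le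
    rwa [(hψderiv 0 (by simp [hδpos])).deriv,
      (hψderiv s (by rw [abs_of_pos hs0]; exact hsδ)).deriv] at this
  -- conclude via slopes
  have hslope : Tendsto (slope φ 0) (𝓝[>] (0:ℝ)) (𝓝 ⟪H τ, τ⟫) :=
    (hasDerivAt_iff_tendsto_slope.1 hφ).mono_left
      (nhdsWithin_mono 0 (fun s hs => ne_of_gt hs))
  refine ge_of_tendsto hslope ?_
  filter_upwards [Ioo_mem_nhdsGT_of_mem (Set.left_mem_Ico.2 hδpos)] with s hs
  rcases hs with ⟨hs0, hsδ⟩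
  rw [slope_def_field, sub_zero]
  exact div_nonneg (sub_nonneg.2 (hmono s hs0 hsδ)) hs0.le

lemma aux_fderiv_sdist_big {U : Set (Eucl n)} (hU : IsOpen U)
    (hsm : ContDiffOn ℝ ∞ (sdist Ω) U) (hΩopen : IsOpen Ω) (hΩconv : Convex ℝ Ω)
    (hne : Ω.Nonempty) {x : Eucl n} (hx : x ∈ frontier Ω) (hxU : x ∈ U) :
    ∃ w : Eucl n, 1 ≤ fderiv ℝ (sdist Ω) x w := by
  obtain ⟨w, hwnorm, hW⟩ := aux_supporting hΩopen hΩconv hne hx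
  refine ⟨w, ?_⟩
  have hdd : DifferentiableAt ℝ (sdist Ω) x :=
    (hsm.contDiffAt (hU.mem_nhds hxU)).differentiableAt (by simp)
  have hcder : HasDerivAt (fun s : ℝ => x + s • w) w 0 := by
    have h1 : HasDerivAt (fun s : ℝ => s • w) ((1:ℝ) • w) 0 :=
      (hasDerivAt_id 0).smul_const w
    rw [one_smul] at h1
    exact h1.const_add x
  have hψ : HasDerivAt (fun s : ℝ => sdist Ω (x + s • w)) (fderiv ℝ (sdist Ω) x w) 0 := by
    have := HasFDerivAt.comp_hasDerivAt 0 (by simpa using hdd.hasFDerivAt) hcder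
    simpa [Function.comp_def] using this
  have hlb : ∀ s : ℝ, s ≤ sdist Ω (x + s • w) := by
    intro s
    have := aux_halfspace_le hne hwnorm hW (x + s • w)
    rw [inner_add_left, real_inner_smul_left, real_inner_self_eq_norm_sq, hwnorm] at this
    simpa using this
  have hzero : sdist Ω x = 0 := aux_sdist_frontier_eq_zero hΩopen hx
  have hslope : Tendsto (slope (fun s : ℝ => sdist Ω (x + s • w)) 0) (𝓝[>] (0:ℝ))
      (𝓝 (fderiv ℝ (sdist Ω) x w)) :=
    (hasDerivAt_iff_tendsto_slope.1 hψ).mono_left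
      (nhdsWithin_mono 0 (fun s hs => ne_of_gt hs))
  refine ge_of_tendsto hslope ?_
  filter_upwards [self_mem_nhdsWithin] with s hs
  rw [slope_def_field, sub_zero]
  have hf0 : sdist Ω (x + (0:ℝ) • w) = 0 := by
    rw [zero_smul, add_zero]; exact hzero
  have : (1:ℝ) ≤ (sdist Ω (x + s • w) - sdist Ω (x + (0:ℝ) • w)) / s := by
    rw [hf0, sub_zero]
    exact (one_le_div hs).2 (hlb s)
  exact this
lemma aux_tangential (hΩopen : IsOpen Ω) (hΩconv : Convex ℝ Ω)
    (hne : Ω.Nonempty) (hcne : Ωᶜ.Nonempty)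
    {U : Set (Eucl n)} (hU : IsOpen U) (hsm : ContDiffOn ℝ ∞ (sdist Ω) U)
    {x : Eucl n} (hx : x ∈ frontier Ω) (hxU : x ∈ U)
    {F : Eucl n → ℝ} {L : Eucl n →L[ℝ] ℝ} {τ : Eucl n}
    (hF : HasFDerivWithinAt F L (frontier Ω) x)
    (hF0 : ∀ y ∈ frontier Ω, F y = 0)
    (hτ : fderiv ℝ (sdist Ω) x τ = 0) : L τ = 0 := by
  set d := sdist Ω with hd
  have hd' : HasStrictFDerivAt d (fderiv ℝ d x) x :=
    (hsm.contDiffAt (hU.mem_nhds hxU)).hasStrictFDerivAt (by simp)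
  -- surjectivity of the derivative
  obtain ⟨w, hw⟩ := aux_fderiv_sdist_big hU hsm hΩopen hΩconv hne hx hxU
  have hwne : fderiv ℝ d x w ≠ 0 := by
    intro h0; rw [h0] at hw; linarith
  have hsurj : LinearMap.range (fderiv ℝ d x : Eucl n →ₗ[ℝ] ℝ) = ⊤ := by
    rw [LinearMap.range_eq_top]
    intro r
    refine ⟨(r / fderiv ℝ d x w) • w, ?_⟩
    rw [ContinuousLinearMap.coe_coe, (fderiv ℝ d x).map_smul, smul_eq_mul, div_mul_cancel₀ _ hwne]
  set K := LinearMap.ker (fderiv ℝ d x : Eucl n →ₗ[ℝ] ℝ) with hK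
  have hτker : τ ∈ K := LinearMap.mem_ker.2 hτ
  set τ' : K := ⟨τ, hτker⟩ with hτ'
  set Φ : ℝ → K → Eucl n := hd'.implicitFunction d (fderiv ℝ d x) hsurj with hΦ
  set γ : ℝ → Eucl n := fun s => Φ (d x) (s • τ') with hγ
  have hγ0 : γ 0 = x := by
    simp only [hγ, zero_smul]
    exact hd'.implicitFunction_apply_image hsurj
  -- derivative of the curve
  have hγder : HasDerivAt γ τ 0 := by
    have hstrict := hd'.to_implicitFunction hsurj
    have hc : HasDerivAt (fun s : ℝ => s • τ') τ' 0 := by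
      have h1 : HasDerivAt (fun s : ℝ => s • τ') ((1:ℝ) • τ') 0 :=
        (hasDerivAt_id 0).smul_const τ'
      rwa [one_smul] at h1
    have hΦf : HasFDerivAt (Φ (d x)) (K.subtypeL) ((fun s : ℝ => s • τ') 0) := by
      have := hstrict.hasFDerivAt
      simpa using this
    have := hΦf.comp_hasDerivAt 0 hc
    simpa [Function.comp_def, hγ] using this
  -- the curve stays in the frontier
  have hev : ∀ᶠ s in 𝓝 (0:ℝ), γ s ∈ frontier Ω := by
    have hmap := hd'.map_implicitFunction_eq hsurj
    have htend : Tendsto (fun s : ℝ => (d x, s • τ')) (𝓝 0) (𝓝 (d x, (0:K))) := by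
      refine Tendsto.prodMk_nhds tendsto_const_nhds ?_
      have : Tendsto (fun s : ℝ => s • τ') (𝓝 0) (𝓝 ((0:ℝ) • τ')) :=
        (continuous_id.smul continuous_const).tendsto 0
      simpa using this
    have hdx0 : d x = 0 := aux_sdist_frontier_eq_zero hΩopen hx
    filter_upwards [htend.eventually hmap] with s hs
    apply aux_sdist_zero_mem_frontier hΩopen hne hcne
    show d (γ s) = 0
    calc d (γ s) = d x := hs
    _ = 0 := hdx0
  obtain ⟨V, hVmem, hVsub⟩ := eventually_iff_exists_mem.1 hev
  have hcomp : HasDerivWithinAt (F ∘ γ) (L τ) V 0 := by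
    refine HasFDerivWithinAt.comp_hasDerivWithinAt 0 ?_ hγder.hasDerivWithinAt hVsub
    rw [hγ0]
    exact hF
  have hAt : HasDerivAt (F ∘ γ) (L τ) 0 := hcomp.hasDerivAt hVmem
  have hzero : HasDerivAt (F ∘ γ) 0 0 := by
    have hconst : HasDerivAt (fun _ : ℝ => (0:ℝ)) 0 0 := hasDerivAt_const _ _
    apply hconst.congr_of_eventuallyEq
    filter_upwards [hVmem] with s hs
    exact hF0 _ (hVsub s hs)
  exact (hzero.unique hAt).symm

set_option maxHeartbeats 2000000 in
/-- for convex `Ω`, `D_{Γ_t}v · ν⃗ ≤ 0` on `∂Ω`;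
equivalently (using the Neumann condition) `dv·ν ≤ 0` on `∂Ω`. -/
theorem boundary_sign_tangential_gradient
    (n : ℕ) (T : ℝ) (hT : 0 < T)
    (Ω : Set (Eucl n)) (hΩopen : IsOpen Ω) (hΩbdd : Bornology.IsBounded Ω)
    (hΩconv : Convex ℝ Ω) (hΩsmooth : SmoothBoundary Ω)
    (f : Eucl n → ℝ → ℝ → Eucl (n + 1)) (u₀ : Eucl n → ℝ) (u : Eucl n → ℝ → ℝ)
    (hsol : IsMCFSolution Ω f u₀ u T)
    -- `v` is `C¹` up to the boundary
    (hv : ∀ t ∈ Ioo (0 : ℝ) T, ContDiffOn ℝ 1 (fun y => vel u y t) (closure Ω))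
    (hu : ∀ t ∈ Ioo (0 : ℝ) T, ContDiffOn ℝ 2 (fun y => u y t) (closure Ω)) :
    ∀ t ∈ Ioo (0 : ℝ) T, ∀ x ∈ frontier Ω,
      ⟪gradient (fun y => vel u y t) x, outNormal Ω x⟫
          - ⟪gradient (fun y => vel u y t) x, sgrad u x t⟫
              * ⟪sgrad u x t, outNormal Ω x⟫ / (vel u x t) ^ 2 ≤ 0 ∧
      ⟪gradient (fun y => vel u y t) x, outNormal Ω x⟫ ≤ 0 := by
  intro t ht x hx
  rcases Ω.eq_empty_or_nonempty with rfl | hne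
  · simp at hx
  have hcne : Ωᶜ.Nonempty := by
    by_contra h
    rw [not_nonempty_iff_eq_empty, compl_empty_iff] at h
    rw [h] at hx
    simp at hx
  obtain ⟨U, hUopen, hUfr, hsm⟩ := hΩsmooth
  have hxU : x ∈ U := hUfr hx
  have neumann0 : ⟪sgrad u x t, outNormal Ω x⟫ = 0 := hsol.neumann t ht x hx
  rw [neumann0, mul_zero, zero_div, sub_zero]
  suffices hX : ⟪gradient (fun y => vel u y t) x, outNormal Ω x⟫ ≤ 0 from ⟨hX, hX⟩
  by_cases hVd : DifferentiableAt ℝ (fun y => vel u y t) x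
  swap
  · rw [gradient_eq_zero_of_not_differentiableAt hVd]
    simp
  -- notation
  set ν : Eucl n := outNormal Ω x with hνdef
  set C : Set (Eucl n) := closure Ω with hCdef
  have hxC : x ∈ C := hx.1
  have hCint : (interior C).Nonempty := by
    obtain ⟨a, ha⟩ := hne
    exact ⟨a, (hΩopen.subset_interior_iff.2 subset_closure) ha⟩
  have hCuniq : UniqueDiffOn ℝ C := uniqueDiffOn_convex hΩconv.closure hCint
  set f : Eucl n → ℝ := fun z => u z t with hfdef
  set G : Eucl n → Eucl n := fun y => sgrad u y t with hGdef
  set τ : Eucl n := sgrad u x t with hτdef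
  have hGx : G x = τ := rfl
  have hu2 : ContDiffOn ℝ 2 f C := hu t ht
  set e := InnerProductSpace.toDual ℝ (Eucl n) with hedef
  set g₁ : Eucl n → Eucl n := fun y => e.symm (fderivWithin ℝ f C y) with hg₁def
  have h12 : (1 : WithTop ℕ∞) + 1 ≤ 2 := by norm_num
  have hone2 : (1 : WithTop ℕ∞) ≤ 2 := by norm_num
  have hw2 : ContDiffOn ℝ 1 (fderivWithin ℝ f C) C := hu2.fderivWithin hCuniq h12
  have hg₁cont : ContinuousOn g₁ C :=
    e.symm.continuous.comp_continuousOn (hw2.continuousOn)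
  have hGcont : ContinuousOn G C := hsol.grad_cont t ht
  have hEqOn : EqOn G g₁ C := by
    have hΩsub : EqOn G g₁ Ω := by
      intro y hy
      have hCA : ContDiffAt ℝ 2 f y :=
        hu2.contDiffAt (mem_nhds_iff.2 ⟨Ω, subset_closure, hΩopen, hy⟩)
      have hdiff : DifferentiableAt ℝ f y := hCA.differentiableAt (by norm_num)
      have hfw : fderivWithin ℝ f C y = fderiv ℝ f y :=
        hdiff.fderivWithin (hCuniq y (subset_closure hy))
      show G y = g₁ y
      rw [hg₁def]
      simp only [hfw]
      rfl
    exact hΩsub.of_subset_closure hGcont hg₁cont subset_closure Subset.rfl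
  have hg₁dW : DifferentiableWithinAt ℝ g₁ C x := by
    have h1 : DifferentiableWithinAt ℝ (fderivWithin ℝ f C) C x :=
      (hw2.differentiableOn one_ne_zero) x hxC
    exact (e.symm.toContinuousLinearEquiv.differentiableAt).comp_differentiableWithinAt x h1
  have hGdW : DifferentiableWithinAt ℝ G C x :=
    hg₁dW.congr (fun y hy => hEqOn hy) (hEqOn hxC)
  set A := fderivWithin ℝ G C x with hAdef
  have hGA : HasFDerivWithinAt G A C x := hGdW.hasFDerivWithinAt
  -- symmetry of the Hessian of u
  have hIC : interior C = Ω := aux_interior_closure hΩopen hΩconv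
  set T : Eucl n →L[ℝ] (Eucl n →L[ℝ] ℝ) := innerSL ℝ with hTdef
  have hTapp : ∀ v w : Eucl n, T v w = ⟪v, w⟫ := fun v w => rfl
  have hfint : ∀ y ∈ interior C, HasFDerivAt f (T (G y)) y := by
    intro y hy
    rw [hIC] at hy
    have hCA : ContDiffAt ℝ 2 f y :=
      hu2.contDiffAt (mem_nhds_iff.2 ⟨Ω, subset_closure, hΩopen, hy⟩)
    have hdiff : DifferentiableAt ℝ f y := hCA.differentiableAt (by norm_num)
    have hTy : T (G y) = (InnerProductSpace.toDual ℝ (Eucl n)) (G y) := by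
      ext w
      rw [hTapp]
      exact (InnerProductSpace.toDual_apply_apply).symm
    rw [hTy]
    exact hdiff.hasGradientAt.hasFDerivAt
  have hx' : HasFDerivWithinAt (fun y => T (G y)) (T.comp A) (interior C) x :=
    T.hasFDerivAt.comp_hasFDerivWithinAt x (hGA.mono interior_subset)
  have hsymm : ∀ v w : Eucl n, ⟪A v, w⟫ = ⟪A w, v⟫ := by
    intro v w
    have h := Convex.second_derivative_within_at_symmetric
      hΩconv.closure hCint hfint hxC hx' v w
    simpa only [ContinuousLinearMap.comp_apply, hTapp] using h
  -- the normal direction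
  set d : Eucl n → ℝ := sdist Ω with hddef
  set N : Eucl n → Eucl n := fun y => gradient d y with hNdef
  have hNx : N x = ν := rfl
  have hfdU : ContDiffOn ℝ 1 (fderiv ℝ d) U := hsm.fderiv_of_isOpen hUopen aux_infty_le
  have hNC1 : ContDiffOn ℝ 1 N U := by
    have h1 : ContDiff ℝ 1 fun ℓ : (Eucl n) →L[ℝ] ℝ => e.symm ℓ := e.symm.contDiff
    exact h1.comp_contDiffOn hfdU
  have hNdiff : DifferentiableAt ℝ N x :=
    (hNC1.differentiableOn one_ne_zero).differentiableAt (hUopen.mem_nhds hxU)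
  set H := fderiv ℝ N x with hHdef
  -- tangential derivative of the Neumann condition
  have hGfr : HasFDerivWithinAt G A (frontier Ω) x := hGA.mono frontier_subset_closure
  have hNfr : HasFDerivWithinAt N H (frontier Ω) x := hNdiff.hasFDerivAt.hasFDerivWithinAt
  have hFder : HasFDerivWithinAt (fun y => ⟪G y, N y⟫)
      ((fderivInnerCLM ℝ (G x, N x)).comp (A.prod H)) (frontier Ω) x :=
    hGfr.inner ℝ hNfr
  have hF0 : ∀ y ∈ frontier Ω, ⟪G y, N y⟫ = 0 := fun y hy => hsol.neumann t ht y hy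
  have hτker : fderiv ℝ d x τ = 0 := by
    rw [← aux_grad_apply d x τ, real_inner_comm]
    exact neumann0
  have hLτ := aux_tangential hΩopen hΩconv hne hcne hUopen hsm hx hxU hFder hF0 hτker
  have hLτ' : ⟪G x, H τ⟫ + ⟪A τ, N x⟫ = 0 := by
    simpa only [ContinuousLinearMap.comp_apply, ContinuousLinearMap.prod_apply,
      fderivInnerCLM_apply] using hLτ
  have hHess : 0 ≤ ⟪H τ, τ⟫ :=
    aux_hess_nonneg hUopen hsm (aux_sdist_convex hΩopen hΩconv hne hcne) hxU τ
  have hAτν : ⟪A τ, ν⟫ ≤ 0 := by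
    have h1 : ⟪G x, H τ⟫ = ⟪H τ, τ⟫ := by rw [hGx, real_inner_comm]
    rw [h1, hNx] at hLτ'
    linarith
  -- computing the boundary term
  have hvpos : (0:ℝ) < 1 + ‖τ‖^2 := by positivity
  have hinner : HasFDerivWithinAt (fun y => (1:ℝ) + ⟪G y, G y⟫)
      ((fderivInnerCLM ℝ (G x, G x)).comp (A.prod A)) C x :=
    (hGA.inner ℝ hGA).const_add 1
  have hsq : HasDerivAt Real.sqrt (1 / (2 * Real.sqrt (1 + ‖τ‖^2)))
      ((fun y => (1:ℝ) + ⟪G y, G y⟫) x) := by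
    have hvv : (fun y => (1:ℝ) + ⟪G y, G y⟫) x = 1 + ‖τ‖^2 := by
      show (1:ℝ) + ⟪G x, G x⟫ = 1 + ‖τ‖^2
      rw [hGx, real_inner_self_eq_norm_sq]
    rw [hvv]
    exact Real.hasDerivAt_sqrt (ne_of_gt hvpos)
  have hVW : HasFDerivWithinAt (fun y => vel u y t)
      ((1 / (2 * Real.sqrt (1 + ‖τ‖^2))) •
        ((fderivInnerCLM ℝ (G x, G x)).comp (A.prod A))) C x := by
    have h1 := hsq.comp_hasFDerivWithinAt x hinner
    have heq : (Real.sqrt ∘ fun y => (1:ℝ) + ⟪G y, G y⟫) = fun y => vel u y t := by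
      funext y
      simp only [Function.comp_apply, vel]
      rw [show ⟪G y, G y⟫ = ‖G y‖^2 from real_inner_self_eq_norm_sq (G y)]
    rwa [heq] at h1
  have hXf : ⟪gradient (fun y => vel u y t) x, ν⟫
      = fderivWithin ℝ (fun y => vel u y t) C x ν := by
    rw [aux_grad_apply, hVd.fderivWithin (hCuniq x hxC)]
  rw [hXf, hVW.fderivWithin (hCuniq x hxC)]
  simp only [ContinuousLinearMap.smul_apply, ContinuousLinearMap.comp_apply,
    ContinuousLinearMap.prod_apply, fderivInnerCLM_apply, smul_eq_mul]
  have h1 : ⟪G x, A ν⟫ = ⟪A τ, ν⟫ := by rw [hGx, real_inner_comm]; exact hsymm ν τ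
  have h2 : ⟪A ν, G x⟫ = ⟪A τ, ν⟫ := by rw [hGx]; exact hsymm ν τ
  rw [h1, h2]
  have hpos : (0:ℝ) ≤ 1 / (2 * Real.sqrt (1 + ‖τ‖^2)) := by positivity
  nlinarith [hAτν, hpos]

end
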